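/- Stability and invariance of counterfactuals for the Gumbel-Max SCM (conditional-measure form): let S be a finite nonempty type, let p and p' be strictly positive probability vectors on S, and let i ∈ S satisfy p' i / p i ≥ p' j / p j for every j ≠ i. Let E_i = { g : S → ℝ | i is the strict argmax of (log ∘ p) + g }, which has μ_G^S(E_i) = p i > 0. Then the conditional measure of μ_G^S given E_i assigns probability 1 to the event { g | i is the strict argmax of (log ∘ p') + g }; i.e., conditioned on having observed outcome i under p, the counterfactual outcome under p' is almost surely again i. -/

import Mathlib

open MeasureTheory Real ProbabilityTheory

/-- The uniform probability measure on the open interval (0,1). -/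
noncomputable def uniform01 : Measure ℝ := volume.restrict (Set.Ioo (0 : ℝ) 1)

/-- The standard Gumbel distribution on ℝ: the pushforward of the uniform
measure on (0,1) under `u ↦ -log(-log u)`; its CDF is `x ↦ exp (-exp (-x))`. -/
noncomputable def stdGumbel : Measure ℝ :=
  uniform01.map (fun u : ℝ => -Real.log (-Real.log u))

/-- The product measure on `S → ℝ` with i.i.d. standard Gumbel coordinates. -/
noncomputable def gumbelPi (S : Type*) [Fintype S] : Measure (S → ℝ) :=
  Measure.pi (fun _ : S => stdGumbel)

lemma measurable_gmap : Measurable fun u : ℝ => -Real.log (-Real.log u) := by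
  measurability

instance : IsProbabilityMeasure uniform01 := by
  constructor
  simp [uniform01, Real.volume_Ioo]

instance : IsProbabilityMeasure stdGumbel :=
  Measure.isProbabilityMeasure_map measurable_gmap.aemeasurable

lemma stdGumbel_Iio (a : ℝ) :
    stdGumbel (Set.Iio a) = ENNReal.ofReal (Real.exp (-Real.exp (-a))) := by
  rw [stdGumbel, Measure.map_apply measurable_gmap measurableSet_Iio, uniform01,
    Measure.restrict_apply (measurable_gmap measurableSet_Iio)]
  have hset : (fun u : ℝ => -Real.log (-Real.log u)) ⁻¹' Set.Iio a ∩ Set.Ioo 0 1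
      = Set.Ioo 0 (Real.exp (-Real.exp (-a))) := by
    ext u
    simp only [Set.mem_inter_iff, Set.mem_preimage, Set.mem_Iio, Set.mem_Ioo]
    constructor
    · rintro ⟨h1, hu0, hu1⟩
      have hlu : Real.log u < 0 := Real.log_neg hu0 hu1
      have h2 : -a < Real.log (-Real.log u) := by linarith
      have h3 : Real.exp (-a) < -Real.log u := by
        rwa [Real.lt_log_iff_exp_lt (by linarith)] at h2
      refine ⟨hu0, ?_⟩
      rw [← Real.exp_log hu0]
      exact Real.exp_lt_exp.2 (by linarith)
    · rintro ⟨hu0, hub⟩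
      have h1 : u < 1 := lt_of_lt_of_le hub (by
        nlinarith [Real.exp_pos (-a), Real.exp_le_exp.2 (neg_nonpos.2 (Real.exp_pos (-a)).le), Real.exp_zero])
      have hlu : Real.log u < -Real.exp (-a) := by
        rw [← Real.log_exp (-Real.exp (-a))]
        exact Real.log_lt_log hu0 hub
      refine ⟨?_, hu0, h1⟩
      have h3 : Real.exp (-a) < -Real.log u := by linarith
      have : -a < Real.log (-Real.log u) :=
        (Real.lt_log_iff_exp_lt (by linarith [Real.exp_pos (-a)] : (0:ℝ) < -Real.log u)).2 h3
      linarith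
  rw [hset, Real.volume_Ioo, sub_zero]

lemma stdGumbel_lintegral (r : ℝ) (hr : 0 ≤ r) :
    ∫⁻ t, ENNReal.ofReal (Real.exp (-(Real.exp (-t)) * r)) ∂stdGumbel
      = ENNReal.ofReal (1 / (r + 1)) := by
  have hm : Measurable fun t : ℝ => ENNReal.ofReal (Real.exp (-(Real.exp (-t)) * r)) := by
    fun_prop
  rw [stdGumbel, lintegral_map hm measurable_gmap, uniform01]
  have hcongr : ∀ u ∈ Set.Ioo (0:ℝ) 1,
      ENNReal.ofReal (Real.exp (-(Real.exp (-(-Real.log (-Real.log u)))) * r))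
        = ENNReal.ofReal (u ^ r) := by
    intro u hu
    have hlu : Real.log u < 0 := Real.log_neg hu.1 hu.2
    have h1 : Real.exp (-(-Real.log (-Real.log u))) = -Real.log u := by
      rw [neg_neg, Real.exp_log (by linarith)]
    rw [h1, Real.rpow_def_of_pos hu.1]
    ring_nf
  rw [setLIntegral_congr_fun measurableSet_Ioo hcongr]
  rw [← ofReal_integral_eq_lintegral_ofReal]
  · rw [← MeasureTheory.integral_Ioc_eq_integral_Ioo,
      ← intervalIntegral.integral_of_le zero_le_one, integral_rpow (Or.inl (by linarith))]
    congr 1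
    rw [Real.one_rpow, Real.zero_rpow (by linarith)]
    ring
  · have := (intervalIntegral.intervalIntegrable_rpow' (a := 0) (b := 1) (r := r) (by linarith)).1
    rw [integrableOn_Ioc_iff_integrableOn_Ioo] at this
    exact this
  · filter_upwards [self_mem_ae_restrict measurableSet_Ioo] with u hu
    exact Real.rpow_nonneg hu.1.le r

lemma argmax_measurableSet {S : Type*} [Fintype S] (c : S → ℝ) (i : S) :
    MeasurableSet {g : S → ℝ | ∀ k : S, k ≠ i → c k + g k < c i + g i} := by
  have : {g : S → ℝ | ∀ k : S, k ≠ i → c k + g k < c i + g i}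
      = ⋂ k : S, ⋂ _ : k ≠ i, {g : S → ℝ | c k + g k < c i + g i} := by
    ext g; simp [Set.mem_iInter]
  rw [this]
  refine MeasurableSet.iInter fun k => MeasurableSet.iInter fun _ => ?_
  exact measurableSet_lt (by fun_prop) (by fun_prop)

lemma lintegral_pi_eval {ι : Type*} [Fintype ι] (μ : ι → Measure ℝ)
    [∀ j, IsProbabilityMeasure (μ j)] (i : ι) (f : ℝ → ENNReal) (hf : Measurable f) :
    ∫⁻ x, f (x i) ∂Measure.pi μ = ∫⁻ u, f u ∂(μ i) := by
  classical
  have hmap : (Measure.pi μ).map (Function.eval i) = μ i := by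
    refine Measure.ext fun s hs => ?_
    rw [Measure.map_apply (measurable_pi_apply i) hs]
    have hpre : Function.eval i ⁻¹' s
        = Set.pi Set.univ (fun j => if j = i then s else Set.univ) := by
      ext x
      simp only [Set.mem_preimage, Set.mem_univ_pi, Function.eval]
      constructor
      · intro hx j
        by_cases h : j = i
        · subst h; simp [hx]
        · simp [h]
      · intro hx
        have := hx i
        simpa using this
    rw [hpre, Measure.pi_pi]
    have : ∀ j, μ j (if j = i then s else Set.univ) = if j = i then μ i s else 1 := by
      intro j
      by_cases h : j = i
      · subst h; simp
      · simp [h]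
    simp only [this]
    rw [Finset.prod_ite_eq' Finset.univ i (fun _ => μ i s)]
    simp
  rw [← hmap, lintegral_map hf (measurable_pi_apply i)]

set_option maxHeartbeats 1000000 in
lemma gumbelPi_argmax {S : Type*} [Fintype S] (p : S → ℝ) (hp : ∀ s, 0 < p s)
    (hpsum : ∑ s, p s = 1) (i : S) :
    gumbelPi S {g : S → ℝ | ∀ k : S, k ≠ i →
        Real.log (p k) + g k < Real.log (p i) + g i} = ENNReal.ofReal (p i) := by
  classical
  haveI : Unique {j : S // j = i} := ⟨⟨⟨i, rfl⟩⟩, fun x => Subtype.ext x.2⟩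
  set E := {g : S → ℝ | ∀ k : S, k ≠ i →
      Real.log (p k) + g k < Real.log (p i) + g i} with hE
  have hEm := argmax_measurableSet (fun k => Real.log (p k)) i
  set e := MeasurableEquiv.piEquivPiSubtypeProd (fun _ : S => ℝ) (fun j => j = i) with he
  have hmp := measurePreserving_piEquivPiSubtypeProd (fun _ : S => stdGumbel) (fun j => j = i)
  have hsy : ∀ (x : ({j : S // j = i} → ℝ) × ({j : S // ¬ j = i} → ℝ)) (j : S),
      e.symm x j = if h : j = i then x.1 ⟨j, h⟩ else x.2 ⟨j, h⟩ := by
    intro x j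
    rfl
  have hsymm : ∀ x : ({j : S // j = i} → ℝ) × ({j : S // ¬ j = i} → ℝ),
      e.symm x ∈ E ↔ ∀ k : {j : S // ¬ j = i},
        x.2 k < Real.log (p i) - Real.log (p k.1) + x.1 ⟨i, rfl⟩ := by
    intro x
    constructor
    · intro hx k
      have h0 := hx k.1 k.2
      rw [hsy, hsy, dif_neg k.2, dif_pos rfl] at h0
      linarith
    · intro hx k hk
      have h0 := hx ⟨k, hk⟩
      rw [hsy, hsy, dif_neg hk, dif_pos rfl]
      linarith
  -- move to the product space
  have hmeas_pre : MeasurableSet (e.symm ⁻¹' E) := e.measurable_invFun hEm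
  have hkey : gumbelPi S E = ((Measure.pi fun _ : {j : S // j = i} => stdGumbel).prod
      (Measure.pi fun _ : {j : S // ¬ j = i} => stdGumbel)) (e.symm ⁻¹' E) := by
    have h1 : E = ⇑e ⁻¹' (⇑e.symm ⁻¹' E) := by ext g; simp
    rw [show gumbelPi S E = gumbelPi S (⇑e ⁻¹' (⇑e.symm ⁻¹' E)) by rw [← h1]]
    have h2 := hmp.measure_preimage hmeas_pre.nullMeasurableSet
    refine Eq.trans h2 ?_
    congr!
  set r : ℝ := (1 - p i) / p i with hr_def
  have hpiS : p i ≤ 1 := hpsum ▸ Finset.single_le_sum (fun s _ => (hp s).le) (Finset.mem_univ i)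
  have hr : 0 ≤ r := div_nonneg (by linarith) (hp i).le
  -- inner measure computation
  have hinner : ∀ x : {j : S // j = i} → ℝ,
      (Measure.pi fun _ : {j : S // ¬ j = i} => stdGumbel)
        (Prod.mk x ⁻¹' (e.symm ⁻¹' E))
      = ENNReal.ofReal (Real.exp (-(Real.exp (-(x ⟨i, rfl⟩))) * r)) := by
    intro x
    set t := x ⟨i, rfl⟩ with ht
    have hset : Prod.mk x ⁻¹' (e.symm ⁻¹' E)
        = Set.univ.pi (fun k : {j : S // ¬ j = i} =>
            Set.Iio (Real.log (p i) - Real.log (p k.1) + t)) := by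
      ext y
      simp only [Set.mem_preimage, Set.mem_univ_pi, Set.mem_Iio]
      exact hsymm (x, y)
    rw [hset, Measure.pi_pi]
    have hterm : ∀ k : {j : S // ¬ j = i},
        stdGumbel (Set.Iio (Real.log (p i) - Real.log (p k.1) + t))
          = ENNReal.ofReal (Real.exp (-(Real.exp (-t) * (p k.1 / p i)))) := by
      intro k
      rw [stdGumbel_Iio]
      congr 2
      rw [neg_add, neg_sub, ← Real.log_div (hp k.1).ne' (hp i).ne',
        Real.exp_add, Real.exp_log (div_pos (hp k.1) (hp i))]
      ring
    simp only [hterm]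
    rw [← ENNReal.ofReal_prod_of_nonneg (fun k _ => (Real.exp_pos _).le)]
    congr 1
    rw [← Real.exp_sum]
    congr 1
    have hsum2 : ∑ k : {j : S // ¬ j = i}, p k.1 = 1 - p i := by
      have h1 : ∑ k : {j : S // ¬ j = i}, p k.1
          = ∑ k ∈ Finset.univ.filter (fun j => ¬ j = i), p k := by
        rw [Finset.sum_filter]
        rw [← Finset.sum_subtype (Finset.univ.filter (fun j => ¬ j = i))
          (by simp) (fun k => p k)]
        rw [Finset.sum_filter]
      have h2 : ∑ k ∈ Finset.univ.filter (fun j => ¬ j = i), p k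
          = (∑ k, p k) - p i := by
        have h3 := Finset.sum_filter_add_sum_filter_not Finset.univ (fun j => ¬ j = i) p
        have h4 : ∑ k ∈ Finset.univ.filter (fun j => ¬¬ j = i), p k = p i := by
          have hfil : Finset.univ.filter (fun j => ¬¬ j = i) = {i} := by
            ext j
            simp [not_not]
          rw [hfil, Finset.sum_singleton]
        linarith
      rw [h1, h2, hpsum]
    have hsum3 : ∑ k : {j : S // ¬ j = i}, -(Real.exp (-t) * (p k.1 / p i))
        = -(Real.exp (-t) / p i) * (1 - p i) := by
      rw [← hsum2, Finset.mul_sum]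
      exact Finset.sum_congr rfl fun k _ => by ring
    rw [hsum3, hr_def]
    field_simp
  -- outer integral
  rw [hkey, Measure.prod_apply hmeas_pre]
  calc ∫⁻ x, (Measure.pi fun _ : {j : S // ¬ j = i} => stdGumbel)
        (Prod.mk x ⁻¹' (e.symm ⁻¹' E)) ∂(Measure.pi fun _ : {j : S // j = i} => stdGumbel)
      = ∫⁻ x, ENNReal.ofReal (Real.exp (-(Real.exp (-(x ⟨i, rfl⟩))) * r))
          ∂(Measure.pi fun _ : {j : S // j = i} => stdGumbel) := by
        exact lintegral_congr hinner
    _ = ∫⁻ u, ENNReal.ofReal (Real.exp (-(Real.exp (-u)) * r)) ∂stdGumbel := by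
        exact @lintegral_pi_eval {j : S // j = i} _ (fun _ => stdGumbel) _ ⟨i, rfl⟩
          (fun u : ℝ => ENNReal.ofReal (Real.exp (-(Real.exp (-u)) * r))) (by fun_prop)
    _ = ENNReal.ofReal (1 / (r + 1)) := stdGumbel_lintegral r hr
    _ = ENNReal.ofReal (p i) := by
        congr 1
        have h2 : r + 1 = 1 / p i := by
          rw [hr_def]
          field_simp [(hp i).ne']
          ring
        rw [h2, one_div_one_div]

/-- Stability and invariance of counterfactuals for the Gumbel-Max SCM,
conditional-measure form: the event `E_i` that `i` is the strict argmax of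
`log ∘ p + g` has probability `p i > 0`, and if `p' i / p i ≥ p' j / p j` for
all `j ≠ i`, then conditionally on `E_i` the counterfactual outcome under `p'`
(with the same noise) is almost surely again `i`. -/
theorem gumbelMax_cf_invariance_cond {S : Type*} [Fintype S] [Nonempty S]
    (p p' : S → ℝ) (hp : ∀ s, 0 < p s) (hpsum : ∑ s, p s = 1)
    (hp' : ∀ s, 0 < p' s) (hp'sum : ∑ s, p' s = 1)
    (i : S) (hratio : ∀ j : S, j ≠ i → p' i / p i ≥ p' j / p j) :
    gumbelPi S {g : S → ℝ | ∀ k : S, k ≠ i →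
        Real.log (p k) + g k < Real.log (p i) + g i} = ENNReal.ofReal (p i)
    ∧ 0 < ENNReal.ofReal (p i)
    ∧ (gumbelPi S)[|{g : S → ℝ | ∀ k : S, k ≠ i →
          Real.log (p k) + g k < Real.log (p i) + g i}]
        {g : S → ℝ | ∀ k : S, k ≠ i →
          Real.log (p' k) + g k < Real.log (p' i) + g i}
        = 1 := by
  set E := {g : S → ℝ | ∀ k : S, k ≠ i →
      Real.log (p k) + g k < Real.log (p i) + g i} with hE
  set E' := {g : S → ℝ | ∀ k : S, k ≠ i →
      Real.log (p' k) + g k < Real.log (p' i) + g i} with hE'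
  have hmeasE : MeasurableSet E := argmax_measurableSet (fun k => Real.log (p k)) i
  have hval : gumbelPi S E = ENNReal.ofReal (p i) := gumbelPi_argmax p hp hpsum i
  have hpos : 0 < ENNReal.ofReal (p i) := ENNReal.ofReal_pos.2 (hp i)
  refine ⟨hval, hpos, ?_⟩
  have hsub : E ⊆ E' := by
    intro g hg k hk
    have h1 : Real.log (p k) + g k < Real.log (p i) + g i := hg k hk
    have h2 : Real.log (p' k) - Real.log (p k) ≤ Real.log (p' i) - Real.log (p i) := by
      have h3 : p' k / p k ≤ p' i / p i := hratio k hk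
      have h4 := Real.log_le_log (div_pos (hp' k) (hp k)) h3
      rwa [Real.log_div (hp' k).ne' (hp k).ne', Real.log_div (hp' i).ne' (hp i).ne'] at h4
    linarith
  have hEE' : E ∩ E' = E := Set.inter_eq_self_of_subset_left hsub
  rw [ProbabilityTheory.cond_apply hmeasE, hEE', hval]
  exact ENNReal.inv_mul_cancel (by simpa using hpos.ne') ENNReal.ofReal_ne_top
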